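/- Let n ≥ 3 and in K[x_{n+1},...,x_{2n}] set Π = x_{n+1}···x_{2n}, L = x_{n+1} + ... + x_{2n}, Δ_i = L·Π/x_{n+1+i} for 0 ≤ i ≤ n−1, and Δ_n = Π. Then the products δ_{ij} = Δ_i Δ_j for 0 ≤ i ≤ j ≤ n are linearly independent over K. -/

import Mathlib

open MvPolynomial

namespace DeltaAux

variable {n : ℕ}

/-- exponent of `x_y * ∏_{t ≠ w} x_t`. -/
noncomputable def Dm (w y : Fin n) : Fin n →₀ ℕ :=
  (∑ t ∈ Finset.univ.erase w, Finsupp.single t 1) + Finsupp.single y 1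

lemma Dm_apply (w y t : Fin n) :
    Dm w y t = (if (t : ℕ) = (w : ℕ) then 0 else 1) +
      (if (y : ℕ) = (t : ℕ) then 1 else 0) := by
  classical
  unfold Dm
  rw [Finsupp.add_apply, Finsupp.finset_sum_apply]
  simp only [Finsupp.single_apply]
  rw [Finset.sum_ite_eq' (Finset.univ.erase w) t (fun _ => 1)]
  simp [Finset.mem_erase, Fin.ext_iff]

lemma Dm_add_eq_iff (w y x z w' y' x' z' : Fin n) :
    Dm w y + Dm x z = Dm w' y' + Dm x' z' ↔
      ∀ t : Fin n,
        ((if (t : ℕ) = (w : ℕ) then 0 else 1) + (if (y : ℕ) = (t : ℕ) then 1 else 0)) +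
        ((if (t : ℕ) = (x : ℕ) then 0 else 1) + (if (z : ℕ) = (t : ℕ) then 1 else 0)) =
        ((if (t : ℕ) = (w' : ℕ) then 0 else 1) + (if (y' : ℕ) = (t : ℕ) then 1 else 0)) +
        ((if (t : ℕ) = (x' : ℕ) then 0 else 1) + (if (z' : ℕ) = (t : ℕ) then 1 else 0)) := by
  rw [DFunLike.ext_iff]
  exact forall_congr' fun t => by
    rw [Finsupp.add_apply, Finsupp.add_apply, Dm_apply, Dm_apply, Dm_apply, Dm_apply]

lemma excl1 (i a b w x k l : Fin n) (hia : (i : ℕ) ≠ a) (hib : (i : ℕ) ≠ b)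
    (hwx : ¬((w : ℕ) = i ∧ (x : ℕ) = i)) :
    Dm w k + Dm x l ≠ Dm i a + Dm i b := by
  intro h
  rw [Dm_add_eq_iff] at h
  have hI := h i
  split_ifs at hI <;> omega

lemma count1 (i a b : Fin n) (hia : (i : ℕ) ≠ a) (hib : (i : ℕ) ≠ b)
    (hab : (a : ℕ) ≠ b) (k l : Fin n) :
    Dm i k + Dm i l = Dm i a + Dm i b ↔ (k = a ∧ l = b) ∨ (k = b ∧ l = a) := by
  constructor
  · intro h
    rw [Dm_add_eq_iff] at h
    have hA := h a
    have hB := h b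
    have : ((k : ℕ) = a ∧ (l : ℕ) = b) ∨ ((k : ℕ) = b ∧ (l : ℕ) = a) := by
      split_ifs at hA hB <;> omega
    rcases this with ⟨h1, h2⟩ | ⟨h1, h2⟩
    · exact Or.inl ⟨Fin.ext h1, Fin.ext h2⟩
    · exact Or.inr ⟨Fin.ext h1, Fin.ext h2⟩
  · rintro (⟨rfl, rfl⟩ | ⟨rfl, rfl⟩)
    · rfl
    · rw [add_comm]

lemma excl2x (i j a w x k l : Fin n) (hai : (a : ℕ) ≠ i) (haj : (a : ℕ) ≠ j)
    (hx : (x : ℕ) = a) :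
    Dm w k + Dm x l ≠ Dm i a + Dm j a := by
  intro h
  rw [Dm_add_eq_iff] at h
  have hA := h a
  split_ifs at hA <;> omega

lemma excl2 (i j a w x k l : Fin n) (hij : (i : ℕ) < j) (hai : (a : ℕ) ≠ i)
    (haj : (a : ℕ) ≠ j) (hwx : (w : ℕ) ≤ x) (hwxne : (w : ℕ) ≠ x)
    (hne : ¬((w : ℕ) = i ∧ (x : ℕ) = j)) :
    Dm w k + Dm x l ≠ Dm i a + Dm j a := by
  intro h
  rw [Dm_add_eq_iff] at h
  have h1 : (k : ℕ) = a ∧ (l : ℕ) = a ∧ (a : ℕ) ≠ w ∧ (a : ℕ) ≠ x := by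
    have hA := h a
    split_ifs at hA <;> omega
  obtain ⟨hk, hl, haw, hax⟩ := h1
  have h2 : ((i : ℕ) = w ∧ (i : ℕ) ≠ x) ∨ ((i : ℕ) ≠ w ∧ (i : ℕ) = x) := by
    have hI := h i
    split_ifs at hI <;> omega
  have h3 : ((j : ℕ) = w ∧ (j : ℕ) ≠ x) ∨ ((j : ℕ) ≠ w ∧ (j : ℕ) = x) := by
    have hJ := h j
    split_ifs at hJ <;> omega
  omega

lemma count2 (i j a : Fin n) (hij : (i : ℕ) ≠ j) (hai : (a : ℕ) ≠ i)
    (haj : (a : ℕ) ≠ j) (k l : Fin n) :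
    Dm i k + Dm j l = Dm i a + Dm j a ↔ (k = a ∧ l = a) := by
  constructor
  · intro h
    rw [Dm_add_eq_iff] at h
    have hA := h a
    have : (k : ℕ) = a ∧ (l : ℕ) = a := by
      split_ifs at hA <;> omega
    exact ⟨Fin.ext this.1, Fin.ext this.2⟩
  · rintro ⟨rfl, rfl⟩
    rfl

lemma excl3 (i a w k : Fin n) (hai : (a : ℕ) ≠ i) (hw : (w : ℕ) ≠ i) :
    Dm w k + Dm i i ≠ Dm i a + Dm i i := by
  intro h
  rw [Dm_add_eq_iff] at h
  have hI := h i
  split_ifs at hI <;> omega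

lemma excl3' (i a : Fin n) (hai : (a : ℕ) ≠ i) :
    Dm i i + Dm i i ≠ Dm i a + Dm i i := by
  intro h
  rw [Dm_add_eq_iff] at h
  have hI := h i
  split_ifs at hI <;> omega

lemma count3 (i a : Fin n) (hai : (a : ℕ) ≠ i) (k : Fin n) :
    Dm i k + Dm i i = Dm i a + Dm i i ↔ k = a := by
  constructor
  · intro h
    rw [Dm_add_eq_iff] at h
    have hA := h a
    have : (k : ℕ) = a := by
      split_ifs at hA <;> omega
    exact Fin.ext this
  · rintro rfl
    rfl

end DeltaAux

section KLayer

open MvPolynomial DeltaAux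

variable {n : ℕ} {K : Type*} [Field K]

lemma prod_X_eq (s : Finset (Fin n)) :
    (∏ j ∈ s, (X j : MvPolynomial (Fin n) K)) =
      monomial (∑ j ∈ s, Finsupp.single j 1) 1 := by
  classical
  induction s using Finset.induction with
  | empty => simp
  | insert _ _ h ih =>
      rw [Finset.prod_insert h, Finset.sum_insert h, ih,
        show (X _ : MvPolynomial (Fin n) K) = monomial (Finsupp.single _ 1) 1 from by
          rw [← X_pow_eq_monomial, pow_one],
        monomial_mul, one_mul]

lemma sum_count3 (a : Fin n) :
    (∑ k : Fin n, if k = a then (1 : K) else 0) = 1 := by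
  simp

lemma sum_count2 (a : Fin n) :
    (∑ k : Fin n, ∑ l : Fin n, if k = a ∧ l = a then (1 : K) else 0) = 1 := by
  simp [ite_and]

lemma sum_count1 (a b : Fin n) (hab : a ≠ b) :
    (∑ k : Fin n, ∑ l : Fin n,
      if (k = a ∧ l = b) ∨ (k = b ∧ l = a) then (1 : K) else 0) = 2 := by
  have hsplit : ∀ k l : Fin n,
      (if (k = a ∧ l = b) ∨ (k = b ∧ l = a) then (1 : K) else 0) =
        (if k = a ∧ l = b then (1 : K) else 0) +
        (if k = b ∧ l = a then (1 : K) else 0) := by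
    intro k l
    by_cases h1 : k = a ∧ l = b <;> by_cases h2 : k = b ∧ l = a
    · exact absurd (h1.1.symm.trans h2.1) hab
    · simp [h1, h2, hab, Ne.symm hab]
    · simp [h1, h2, hab, Ne.symm hab]
    · simp [h1, h2, hab, Ne.symm hab]
  simp only [hsplit, Finset.sum_add_distrib, ite_and]
  simp
  norm_num
end KLayer

/-- Let `n ≥ 3` and work in `K[x_{n+1},…,x_{2n}]` (the `n` variables indexed by
`Fin n`, where index `i` stands for `x_{n+1+i}`).  With `Π = x_{n+1}⋯x_{2n}`,
`L = x_{n+1}+⋯+x_{2n}`, `Δ_i = L·Π/x_{n+1+i}` for `0 ≤ i ≤ n-1` and `Δ_n = Π`,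
the products `δ_{ij} = Δ_iΔ_j` for `0 ≤ i ≤ j ≤ n` are linearly independent over `K`. -/
theorem deltas_products_linearIndependent
    {K : Type*} [Field K] [CharZero K] {n : ℕ} (hn : 3 ≤ n)
    (Δ : Fin (n + 1) → MvPolynomial (Fin n) K)
    (hΔ : ∀ i : Fin (n + 1), Δ i = if h : (i : ℕ) < n
        then (∑ j : Fin n, X j) * ∏ j ∈ Finset.univ.erase (⟨(i : ℕ), h⟩ : Fin n), X j
        else ∏ j : Fin n, X j) :
    LinearIndependent K
      (fun p : {p : Fin (n + 1) × Fin (n + 1) // p.1 ≤ p.2} => Δ p.1.1 * Δ p.1.2) := by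
  classical
  have hn1 : 0 < n := by omega
  rw [Fintype.linearIndependent_iff]
  intro g hg
  -- coefficient extraction
  have key : ∀ m : Fin n →₀ ℕ,
      ∑ p : {p : Fin (n + 1) × Fin (n + 1) // p.1 ≤ p.2},
        g p * coeff m (Δ p.1.1 * Δ p.1.2) = 0 := by
    intro m
    have h := congrArg (coeff m) hg
    simpa [coeff_sum, coeff_smul, smul_eq_mul] using h
  -- expansions of Δ
  have hdc : ∀ i : Fin n,
      Δ i.castSucc = ∑ k : Fin n, monomial (DeltaAux.Dm i k) (1 : K) := by
    intro i
    have hpos : ((i.castSucc : Fin (n + 1)) : ℕ) < n := by simpa using i.isLt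
    rw [hΔ, dif_pos hpos]
    have hmk : (⟨((i.castSucc : Fin (n + 1)) : ℕ), hpos⟩ : Fin n) = i := by
      apply Fin.ext; simp
    rw [hmk, prod_X_eq, Finset.sum_mul]
    refine Finset.sum_congr rfl fun k _ => ?_
    rw [show (X k : MvPolynomial (Fin n) K) = monomial (Finsupp.single k 1) 1 from by
      rw [← X_pow_eq_monomial, pow_one], monomial_mul, one_mul]
    simp [DeltaAux.Dm, add_comm]
  have hdl : ∀ c : Fin n,
      Δ (Fin.last n) = monomial (DeltaAux.Dm c c) (1 : K) := by
    intro c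
    have husum : DeltaAux.Dm c c = ∑ j : Fin n, Finsupp.single j 1 :=
      Finset.sum_erase_add Finset.univ (fun t => Finsupp.single t 1)
        (Finset.mem_univ c)
    rw [hΔ, dif_neg (by simp), prod_X_eq, husum]
  -- coefficients of the products
  have ccc : ∀ (m : Fin n →₀ ℕ) (i j : Fin n),
      coeff m (Δ i.castSucc * Δ j.castSucc) =
        ∑ k : Fin n, ∑ l : Fin n,
          if DeltaAux.Dm i k + DeltaAux.Dm j l = m then (1 : K) else 0 := by
    intro m i j
    rw [hdc i, hdc j, Finset.sum_mul_sum]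
    simp [coeff_sum, coeff_monomial]
  have ccl : ∀ (m : Fin n →₀ ℕ) (i c : Fin n),
      coeff m (Δ i.castSucc * Δ (Fin.last n)) =
        ∑ k : Fin n,
          if DeltaAux.Dm i k + DeltaAux.Dm c c = m then (1 : K) else 0 := by
    intro m i c
    rw [hdc i, hdl c, Finset.sum_mul]
    simp [coeff_sum, coeff_monomial]
  have cll : ∀ (m : Fin n →₀ ℕ) (c : Fin n),
      coeff m (Δ (Fin.last n) * Δ (Fin.last n)) =
        if DeltaAux.Dm c c + DeltaAux.Dm c c = m then (1 : K) else 0 := by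
    intro m c
    rw [hdl c]
    simp [coeff_monomial]
  -- conversions
  have cast_eq : ∀ (r : Fin (n + 1)) (hr : (r : ℕ) < n),
      r = (⟨(r : ℕ), hr⟩ : Fin n).castSucc := fun r hr => Fin.ext (by simp)
  have last_eq : ∀ s : Fin (n + 1), ¬((s : ℕ) < n) → s = Fin.last n := by
    intro s hs
    apply Fin.ext
    have := s.isLt
    simp only [Fin.val_last]
    omega
  -- Stage 1 : pairs (i,i) with i < n
  have h1 : ∀ i : Fin n, g ⟨(i.castSucc, i.castSucc), le_refl _⟩ = 0 := by
    intro i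
    obtain ⟨a, b, ha, hb, hab⟩ : ∃ a b : Fin n, a ≠ i ∧ b ≠ i ∧ a ≠ b := by
      have hcard : 1 < (Finset.univ.erase i).card := by
        rw [Finset.card_erase_of_mem (Finset.mem_univ i), Finset.card_univ,
          Fintype.card_fin]
        omega
      obtain ⟨a, b, ha, hb, hab⟩ := Finset.one_lt_card_iff.mp hcard
      exact ⟨a, b, (Finset.mem_erase.mp ha).1, (Finset.mem_erase.mp hb).1, hab⟩
    have hia : (i : ℕ) ≠ (a : ℕ) := fun h => ha (Fin.ext h.symm)
    have hib : (i : ℕ) ≠ (b : ℕ) := fun h => hb (Fin.ext h.symm)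
    have hab' : (a : ℕ) ≠ (b : ℕ) := fun h => hab (Fin.ext h)
    have hai : (a : ℕ) ≠ (i : ℕ) := fun h => ha (Fin.ext h)
    have hc := key (DeltaAux.Dm i a + DeltaAux.Dm i b)
    rw [Finset.sum_eq_single_of_mem
      (⟨(i.castSucc, i.castSucc), le_refl _⟩ :
        {p : Fin (n + 1) × Fin (n + 1) // p.1 ≤ p.2})
      (Finset.mem_univ _) ?side1] at hc
    case side1 =>
      rintro ⟨⟨r, s⟩, hle⟩ - hne
      rw [mul_eq_zero]; right; show coeff _ (Δ r * Δ s) = 0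
      by_cases hs : (s : ℕ) < n
      · have hr : (r : ℕ) < n := lt_of_le_of_lt (Fin.le_def.mp hle) hs
        have hrs : ¬(((⟨(r : ℕ), hr⟩ : Fin n) : ℕ) = (i : ℕ) ∧
            ((⟨(s : ℕ), hs⟩ : Fin n) : ℕ) = (i : ℕ)) := by
          rintro ⟨e1, e2⟩
          exact hne (Subtype.ext (Prod.ext (Fin.ext (by simpa using e1))
            (Fin.ext (by simpa using e2))))
        rw [cast_eq r hr, cast_eq s hs, ccc]
        exact Finset.sum_eq_zero fun k _ => Finset.sum_eq_zero fun l _ =>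
          if_neg (DeltaAux.excl1 i a b _ _ k l hia hib hrs)
      · by_cases hr : (r : ℕ) < n
        · rw [cast_eq r hr, last_eq s hs, ccl _ _ a]
          exact Finset.sum_eq_zero fun k _ =>
            if_neg (DeltaAux.excl1 i a b _ a k a hia hib (fun h => hai h.2))
        · rw [last_eq r hr, last_eq s hs, cll _ a]
          exact if_neg (DeltaAux.excl1 i a b a a a a hia hib (fun h => hai h.1))
    rw [ccc] at hc
    have hsum : (∑ k : Fin n, ∑ l : Fin n,
        if DeltaAux.Dm i k + DeltaAux.Dm i l = DeltaAux.Dm i a + DeltaAux.Dm i b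
        then (1 : K) else 0) = 2 := by
      simp only [DeltaAux.count1 i a b hia hib hab']
      exact sum_count1 a b hab
    rw [hsum] at hc
    exact (mul_eq_zero.mp hc).resolve_right two_ne_zero
  -- Stage 2 : pairs (i,j) with i < j < n
  have h2 : ∀ i j : Fin n, ∀ hij : (i : ℕ) < (j : ℕ),
      g ⟨(i.castSucc, j.castSucc),
        by rw [Fin.le_def]; simpa using hij.le⟩ = 0 := by
    intro i j hij
    have hij' : (i : ℕ) ≠ (j : ℕ) := Nat.ne_of_lt hij
    obtain ⟨a, ha, haj⟩ : ∃ a : Fin n, a ≠ i ∧ a ≠ j := by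
      have hcard : 1 < (Finset.univ.erase i).card := by
        rw [Finset.card_erase_of_mem (Finset.mem_univ i), Finset.card_univ,
          Fintype.card_fin]
        omega
      obtain ⟨a, hmem, haj⟩ := Finset.exists_mem_ne hcard j
      exact ⟨a, (Finset.mem_erase.mp hmem).1, haj⟩
    have hai' : (a : ℕ) ≠ (i : ℕ) := fun h => ha (Fin.ext h)
    have haj' : (a : ℕ) ≠ (j : ℕ) := fun h => haj (Fin.ext h)
    have hc := key (DeltaAux.Dm i a + DeltaAux.Dm j a)
    rw [Finset.sum_eq_single_of_mem
      (⟨(i.castSucc, j.castSucc), by rw [Fin.le_def]; simpa using hij.le⟩ :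
        {p : Fin (n + 1) × Fin (n + 1) // p.1 ≤ p.2})
      (Finset.mem_univ _) ?side2] at hc
    case side2 =>
      rintro ⟨⟨r, s⟩, hle⟩ - hne
      by_cases hs : (s : ℕ) < n
      · have hr : (r : ℕ) < n := lt_of_le_of_lt (Fin.le_def.mp hle) hs
        by_cases hrs : (r : ℕ) = (s : ℕ)
        · have hb : (⟨(r, s), hle⟩ :
              {p : Fin (n + 1) × Fin (n + 1) // p.1 ≤ p.2}) =
              ⟨((⟨(r : ℕ), hr⟩ : Fin n).castSucc, (⟨(r : ℕ), hr⟩ : Fin n).castSucc),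
                le_refl _⟩ := by
            exact Subtype.ext (Prod.ext (cast_eq r hr) (Fin.ext (by simpa using hrs.symm)))
          rw [hb, mul_eq_zero]; left; exact h1 _
        · have hlt : (r : ℕ) < (s : ℕ) := lt_of_le_of_ne (Fin.le_def.mp hle) hrs
          rw [mul_eq_zero]; right; show coeff _ (Δ r * Δ s) = 0
          rw [cast_eq r hr, cast_eq s hs, ccc]
          refine Finset.sum_eq_zero fun k _ => Finset.sum_eq_zero fun l _ => if_neg ?_
          refine DeltaAux.excl2 i j a _ _ k l hij hai' haj' (le_of_lt hlt) hrs ?_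
          rintro ⟨e1, e2⟩
          exact hne (Subtype.ext (Prod.ext (Fin.ext (by simpa using e1))
            (Fin.ext (by simpa using e2))))
      · rw [mul_eq_zero]; right; show coeff _ (Δ r * Δ s) = 0
        by_cases hr : (r : ℕ) < n
        · rw [cast_eq r hr, last_eq s hs, ccl _ _ a]
          exact Finset.sum_eq_zero fun k _ =>
            if_neg (DeltaAux.excl2x i j a _ a k a hai' haj' rfl)
        · rw [last_eq r hr, last_eq s hs, cll _ a]
          exact if_neg (DeltaAux.excl2x i j a a a a a hai' haj' rfl)
    rw [ccc] at hc
    have hsum : (∑ k : Fin n, ∑ l : Fin n,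
        if DeltaAux.Dm i k + DeltaAux.Dm j l = DeltaAux.Dm i a + DeltaAux.Dm j a
        then (1 : K) else 0) = 1 := by
      simp only [DeltaAux.count2 i j a hij' hai' haj']
      exact sum_count2 a
    rw [hsum, mul_one] at hc
    exact hc
  -- Stage 3 : pairs (i, n) with i < n
  have h3 : ∀ i : Fin n, g ⟨(i.castSucc, Fin.last n), Fin.le_last _⟩ = 0 := by
    intro i
    obtain ⟨a, ha⟩ : ∃ a : Fin n, a ≠ i := by
      have hcard : 0 < (Finset.univ.erase i).card := by
        rw [Finset.card_erase_of_mem (Finset.mem_univ i), Finset.card_univ,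
          Fintype.card_fin]
        omega
      obtain ⟨a, hmem⟩ := Finset.card_pos.mp hcard
      exact ⟨a, (Finset.mem_erase.mp hmem).1⟩
    have hai' : (a : ℕ) ≠ (i : ℕ) := fun h => ha (Fin.ext h)
    have hc := key (DeltaAux.Dm i a + DeltaAux.Dm i i)
    rw [Finset.sum_eq_single_of_mem
      (⟨(i.castSucc, Fin.last n), Fin.le_last _⟩ :
        {p : Fin (n + 1) × Fin (n + 1) // p.1 ≤ p.2})
      (Finset.mem_univ _) ?side3] at hc
    case side3 =>
      rintro ⟨⟨r, s⟩, hle⟩ - hne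
      by_cases hs : (s : ℕ) < n
      · have hr : (r : ℕ) < n := lt_of_le_of_lt (Fin.le_def.mp hle) hs
        by_cases hrs : (r : ℕ) = (s : ℕ)
        · have hb : (⟨(r, s), hle⟩ :
              {p : Fin (n + 1) × Fin (n + 1) // p.1 ≤ p.2}) =
              ⟨((⟨(r : ℕ), hr⟩ : Fin n).castSucc, (⟨(r : ℕ), hr⟩ : Fin n).castSucc),
                le_refl _⟩ :=
            Subtype.ext (Prod.ext (cast_eq r hr) (Fin.ext (by simpa using hrs.symm)))
          rw [hb, mul_eq_zero]; left; exact h1 _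
        · have hlt : (r : ℕ) < (s : ℕ) := lt_of_le_of_ne (Fin.le_def.mp hle) hrs
          have hb : (⟨(r, s), hle⟩ :
              {p : Fin (n + 1) × Fin (n + 1) // p.1 ≤ p.2}) =
              ⟨((⟨(r : ℕ), hr⟩ : Fin n).castSucc, (⟨(s : ℕ), hs⟩ : Fin n).castSucc),
                by rw [Fin.le_def]; simpa using hlt.le⟩ :=
            Subtype.ext (Prod.ext (cast_eq r hr) (cast_eq s hs))
          rw [hb, mul_eq_zero]; left; exact h2 _ _ hlt
      · by_cases hr : (r : ℕ) < n
        · by_cases hri : (r : ℕ) = (i : ℕ)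
          · exact absurd (Subtype.ext (Prod.ext (Fin.ext (by simpa using hri))
              (last_eq s hs))) hne
          · rw [mul_eq_zero]; right; show coeff _ (Δ r * Δ s) = 0
            rw [cast_eq r hr, last_eq s hs, ccl _ _ i]
            exact Finset.sum_eq_zero fun k _ =>
              if_neg (DeltaAux.excl3 i a _ k hai' hri)
        · rw [mul_eq_zero]; right; show coeff _ (Δ r * Δ s) = 0
          rw [last_eq r hr, last_eq s hs, cll _ i]
          exact if_neg (DeltaAux.excl3' i a hai')
    rw [ccl _ i i] at hc
    have hsum : (∑ k : Fin n,
        if DeltaAux.Dm i k + DeltaAux.Dm i i = DeltaAux.Dm i a + DeltaAux.Dm i i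
        then (1 : K) else 0) = 1 := by
      simp only [DeltaAux.count3 i a hai']
      exact sum_count3 a
    rw [hsum, mul_one] at hc
    exact hc
  -- Stage 4 : the pair (n, n)
  have h4 : g ⟨(Fin.last n, Fin.last n), le_refl _⟩ = 0 := by
    set z : Fin n := ⟨0, hn1⟩ with hz
    have hc := key (DeltaAux.Dm z z + DeltaAux.Dm z z)
    rw [Finset.sum_eq_single_of_mem
      (⟨(Fin.last n, Fin.last n), le_refl _⟩ :
        {p : Fin (n + 1) × Fin (n + 1) // p.1 ≤ p.2})
      (Finset.mem_univ _) ?side4] at hc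
    case side4 =>
      rintro ⟨⟨r, s⟩, hle⟩ - hne
      by_cases hs : (s : ℕ) < n
      · have hr : (r : ℕ) < n := lt_of_le_of_lt (Fin.le_def.mp hle) hs
        by_cases hrs : (r : ℕ) = (s : ℕ)
        · have hb : (⟨(r, s), hle⟩ :
              {p : Fin (n + 1) × Fin (n + 1) // p.1 ≤ p.2}) =
              ⟨((⟨(r : ℕ), hr⟩ : Fin n).castSucc, (⟨(r : ℕ), hr⟩ : Fin n).castSucc),
                le_refl _⟩ :=
            Subtype.ext (Prod.ext (cast_eq r hr) (Fin.ext (by simpa using hrs.symm)))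
          rw [hb, mul_eq_zero]; left; exact h1 _
        · have hlt : (r : ℕ) < (s : ℕ) := lt_of_le_of_ne (Fin.le_def.mp hle) hrs
          have hb : (⟨(r, s), hle⟩ :
              {p : Fin (n + 1) × Fin (n + 1) // p.1 ≤ p.2}) =
              ⟨((⟨(r : ℕ), hr⟩ : Fin n).castSucc, (⟨(s : ℕ), hs⟩ : Fin n).castSucc),
                by rw [Fin.le_def]; simpa using hlt.le⟩ :=
            Subtype.ext (Prod.ext (cast_eq r hr) (cast_eq s hs))
          rw [hb, mul_eq_zero]; left; exact h2 _ _ hlt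
      · by_cases hr : (r : ℕ) < n
        · have hb : (⟨(r, s), hle⟩ :
              {p : Fin (n + 1) × Fin (n + 1) // p.1 ≤ p.2}) =
              ⟨((⟨(r : ℕ), hr⟩ : Fin n).castSucc, Fin.last n), Fin.le_last _⟩ :=
            Subtype.ext (Prod.ext (cast_eq r hr) (last_eq s hs))
          rw [hb, mul_eq_zero]; left; exact h3 _
        · exact absurd (Subtype.ext (Prod.ext (last_eq r hr) (last_eq s hs))) hne
    rw [cll _ z, if_pos rfl, mul_one] at hc
    exact hc
  -- conclude
  rintro ⟨⟨r, s⟩, hle⟩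
  by_cases hs : (s : ℕ) < n
  · have hr : (r : ℕ) < n := lt_of_le_of_lt (Fin.le_def.mp hle) hs
    by_cases hrs : (r : ℕ) = (s : ℕ)
    · have hb : (⟨(r, s), hle⟩ :
          {p : Fin (n + 1) × Fin (n + 1) // p.1 ≤ p.2}) =
          ⟨((⟨(r : ℕ), hr⟩ : Fin n).castSucc, (⟨(r : ℕ), hr⟩ : Fin n).castSucc),
            le_refl _⟩ :=
        Subtype.ext (Prod.ext (cast_eq r hr) (Fin.ext (by simpa using hrs.symm)))
      rw [hb]; exact h1 _
    · have hlt : (r : ℕ) < (s : ℕ) := lt_of_le_of_ne (Fin.le_def.mp hle) hrs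
      have hb : (⟨(r, s), hle⟩ :
          {p : Fin (n + 1) × Fin (n + 1) // p.1 ≤ p.2}) =
          ⟨((⟨(r : ℕ), hr⟩ : Fin n).castSucc, (⟨(s : ℕ), hs⟩ : Fin n).castSucc),
            by rw [Fin.le_def]; simpa using hlt.le⟩ :=
        Subtype.ext (Prod.ext (cast_eq r hr) (cast_eq s hs))
      rw [hb]; exact h2 _ _ hlt
  · by_cases hr : (r : ℕ) < n
    · have hb : (⟨(r, s), hle⟩ :
          {p : Fin (n + 1) × Fin (n + 1) // p.1 ≤ p.2}) =
          ⟨((⟨(r : ℕ), hr⟩ : Fin n).castSucc, Fin.last n), Fin.le_last _⟩ :=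
        Subtype.ext (Prod.ext (cast_eq r hr) (last_eq s hs))
      rw [hb]; exact h3 _
    · have hb : (⟨(r, s), hle⟩ :
          {p : Fin (n + 1) × Fin (n + 1) // p.1 ≤ p.2}) =
          ⟨(Fin.last n, Fin.last n), le_refl _⟩ :=
        Subtype.ext (Prod.ext (last_eq r hr) (last_eq s hs))
      rw [hb]; exact h4
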